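/- Let η ∈ (0,1), ℓ, m, N ∈ ℕ, δ = 2^{−ℓmN}, and β₁ ∈ [0, 1). Let B ⊂ (δ·ℤ) ∩ [0,1] with |B| = δ^{−β₁}, and let B′ ⊂ B be a subset with |B′| ≥ δ^η |B| which is (ℓm, N)-uniform and (η, ℓm, N)-polarised. Let 𝒩_{B′} denote the family of maximal intervals 𝓘 ⊂ {0,…,N−1} such that R_{B′}^{ℓm}(σ) = 1 for all σ ∈ 𝓘, and for an interval 𝓘 = {σ,…,τ} ⊂ {0,…,N−1} write ℓ𝓘 := {ℓσ, ℓσ+1, …, ℓ(τ+1)−1} ⊂ {0,…,ℓN−1}. Then the family ℓ𝒩_{B′} := {ℓ𝓘 : 𝓘 ∈ 𝒩_{B′}} consists of pairwise disjoint intervals whose total length satisfies Σ_{𝓙 ∈ ℓ𝒩_{B′}} |𝓙| ≥ (1 − β₁/(1−η))·ℓN. -/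

import Mathlib

open MeasureTheory Set Pointwise

/-- The dyadic interval of scale `r > 0` with index `k`, i.e. `[k·r, (k+1)·r)`. -/
def dyI (r : ℝ) (k : ℤ) : Set ℝ := Set.Ico ((k : ℝ) * r) (((k : ℝ) + 1) * r)

/-- The covering number `|E|_r`: the number of dyadic intervals of side length `r`
needed to cover `E` (equivalently, meeting `E`). -/
noncomputable def cov (r : ℝ) (E : Set ℝ) : ℕ := Nat.card {k : ℤ | (E ∩ dyI r k).Nonempty}

/-- The lattice `δ·ℤ`. -/
def lat (δ : ℝ) : Set ℝ := {x : ℝ | ∃ z : ℤ, x = δ * (z : ℝ)}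

/-- `A` is `(m, N)`-uniform with branching numbers `R`. -/
def uniform (m N : ℕ) (A : Set ℝ) (R : ℕ → ℕ) : Prop :=
  ∀ s : ℕ, s < N → ∀ k : ℤ, (A ∩ dyI ((2:ℝ) ^ (-(m * s : ℤ))) k).Nonempty →
    cov ((2:ℝ) ^ (-(m * (s + 1) : ℤ))) (A ∩ dyI ((2:ℝ) ^ (-(m * s : ℤ))) k) = R s

/-- `(η, m, N)`-polarisation for branching numbers `RA`, `RB`. A single set `B` with
branching numbers `R` is `(η,m,N)`-polarised iff `polarised η m N R R`. -/
def polarised (η : ℝ) (m N : ℕ) (RA RB : ℕ → ℕ) : Prop :=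
  ∀ s : ℕ, s < N → 1 < RB s → (2:ℝ) ^ ((1 - η) * (m : ℝ)) ≤ (RA s : ℝ)

/-- The family `𝒩` of maximal intervals `{a,…,b} ⊆ {0,…,N−1}` on which `R ≡ 1`,
encoded as the set of pairs `(a, b)` of endpoints. -/
noncomputable def maxOnes (N : ℕ) (R : ℕ → ℕ) : Finset (ℕ × ℕ) := by
  classical
  exact (Finset.range N ×ˢ Finset.range N).filter (fun p =>
    p.1 ≤ p.2 ∧ (∀ σ : ℕ, p.1 ≤ σ → σ ≤ p.2 → R σ = 1) ∧
    (p.1 = 0 ∨ R (p.1 - 1) ≠ 1) ∧ (p.2 + 1 = N ∨ R (p.2 + 1) ≠ 1))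

/-- For an interval `𝓘 = {σ,…,τ}` encoded as the pair `(σ,τ)`, the rescaled interval
`ℓ𝓘 = {ℓσ, …, ℓ(τ+1) − 1}`, encoded as the finset `Ico (ℓσ) (ℓ(τ+1))`. -/
def ellI (ℓ : ℕ) (p : ℕ × ℕ) : Finset ℕ := Finset.Ico (ℓ * p.1) (ℓ * (p.2 + 1))

/-! ### Auxiliary lemmas on dyadic intervals -/

lemma dyI_mem_iff {r : ℝ} (hr : 0 < r) {x : ℝ} {k : ℤ} : x ∈ dyI r k ↔ k = ⌊x / r⌋ := by
  rw [dyI, Set.mem_Ico, eq_comm, Int.floor_eq_iff]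
  constructor
  · rintro ⟨h1, h2⟩
    constructor
    · rw [le_div_iff₀ hr]; linarith
    · rw [div_lt_iff₀ hr]; linarith
  · rintro ⟨h1, h2⟩
    rw [le_div_iff₀ hr] at h1
    rw [div_lt_iff₀ hr] at h2
    constructor <;> linarith

lemma dyI_self {r : ℝ} (hr : 0 < r) (x : ℝ) : x ∈ dyI r ⌊x / r⌋ := (dyI_mem_iff hr).2 rfl

lemma dyI_unique {r : ℝ} (hr : 0 < r) {x : ℝ} {j k : ℤ} (hj : x ∈ dyI r j) (hk : x ∈ dyI r k) :
    j = k := by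
  rw [dyI_mem_iff hr] at hj hk; omega

lemma dyI_subset {r : ℝ} (hr : 0 < r) {n : ℕ} (hn : 0 < n) {j k : ℤ}
    (h : (dyI r j ∩ dyI ((n : ℝ) * r) k).Nonempty) : dyI r j ⊆ dyI ((n : ℝ) * r) k := by
  obtain ⟨x, hxj, hxk⟩ := h
  have hnr : (0:ℝ) < (n:ℝ) * r := by positivity
  have hj : j = ⌊x / r⌋ := (dyI_mem_iff hr).1 hxj
  have hk : k = ⌊x / ((n:ℝ) * r)⌋ := (dyI_mem_iff hnr).1 hxk
  have hn' : (0:ℝ) < (n:ℝ) := by exact_mod_cast hn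
  have h1 : (k : ℝ) * n ≤ x / r := by
    have h := Int.floor_le (x / ((n:ℝ) * r))
    rw [← hk, le_div_iff₀ hnr] at h
    rw [le_div_iff₀ hr]; nlinarith
  have h2 : x / r < ((k : ℝ) + 1) * n := by
    have := Int.lt_floor_add_one (x / ((n:ℝ) * r))
    rw [← hk] at this
    rw [div_lt_iff₀ hnr] at this
    rw [div_lt_iff₀ hr]; nlinarith
  have hkn1 : k * n ≤ j := by
    have : (↑(k * n) : ℝ) ≤ x / r := by push_cast; exact h1
    have := Int.le_floor.2 this
    omega
  have hkn2 : j + 1 ≤ (k + 1) * n := by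
    have : (⌊x / r⌋ : ℝ) ≤ x / r := Int.floor_le _
    have hlt : (j : ℝ) < ((k:ℝ) + 1) * n := by rw [hj]; linarith
    have : j < (k + 1) * (n : ℤ) := by exact_mod_cast hlt
    omega
  intro y hy
  rw [dyI, Set.mem_Ico] at hy ⊢
  have e1 : (k : ℝ) * ((n:ℝ) * r) ≤ (j : ℝ) * r := by
    have : ((k * n : ℤ) : ℝ) ≤ (j : ℝ) := by exact_mod_cast hkn1
    push_cast at this; nlinarith
  have e2 : ((j : ℝ) + 1) * r ≤ ((k : ℝ) + 1) * ((n:ℝ) * r) := by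
    have : ((j + 1 : ℤ) : ℝ) ≤ (((k + 1) * n : ℤ) : ℝ) := by exact_mod_cast hkn2
    push_cast at this; nlinarith
  exact ⟨le_trans e1 hy.1, lt_of_lt_of_le hy.2 e2⟩

lemma finite_ks {r : ℝ} (hr : 0 < r) {E : Set ℝ} (hE : E ⊆ Set.Icc 0 1) :
    {k : ℤ | (E ∩ dyI r k).Nonempty}.Finite := by
  apply Set.Finite.subset (Set.finite_Icc (0 : ℤ) ⌊1 / r⌋)
  rintro k ⟨x, hxE, hxk⟩
  obtain ⟨hx0, hx1⟩ := hE hxE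
  have hk : k = ⌊x / r⌋ := (dyI_mem_iff hr).1 hxk
  constructor
  · rw [hk]; positivity
  · rw [hk]; exact Int.floor_le_floor (div_le_div_of_nonneg_right hx1 hr.le)

lemma cov_pos {r : ℝ} (hr : 0 < r) {E : Set ℝ} (hE : E ⊆ Set.Icc 0 1) (hne : E.Nonempty) :
    1 ≤ cov r E := by
  rw [cov, Nat.card_coe_set_eq]
  rw [Nat.one_le_iff_ne_zero]
  intro h
  obtain ⟨x, hx⟩ := hne
  have hmem : ⌊x / r⌋ ∈ {k : ℤ | (E ∩ dyI r k).Nonempty} := ⟨x, hx, dyI_self hr x⟩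
  have := (Set.ncard_eq_zero (finite_ks hr hE)).1 h
  rw [this] at hmem
  exact hmem

lemma sum_ncard_le {ι : Type*} [DecidableEq ι] (F : Finset ι) (A : ι → Set ℝ) (E : Set ℝ)
    (hfin : E.Finite) (hsub : ∀ j ∈ F, A j ⊆ E)
    (hdisj : ∀ j ∈ F, ∀ k ∈ F, j ≠ k → Disjoint (A j) (A k)) :
    ∑ j ∈ F, (A j).ncard ≤ E.ncard := by
  induction F using Finset.induction generalizing E with
  | empty => simp
  | @insert j F hj ih =>
    rw [Finset.sum_insert hj]
    have hAjE : A j ⊆ E := hsub j (Finset.mem_insert_self j F)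
    have hrest : ∑ i ∈ F, (A i).ncard ≤ (E \ A j).ncard := by
      apply ih (E \ A j) hfin.diff
      · intro i hi
        have hd := hdisj i (Finset.mem_insert_of_mem hi) j (Finset.mem_insert_self j F)
          (by rintro rfl; exact hj hi)
        intro x hx
        exact ⟨hsub i (Finset.mem_insert_of_mem hi) hx, fun hxj => hd.le_bot ⟨hx, hxj⟩⟩
      · intro a ha b hb hab
        exact hdisj a (Finset.mem_insert_of_mem ha) b (Finset.mem_insert_of_mem hb) hab
    have := Set.ncard_diff_add_ncard_of_subset hAjE hfin
    omega

lemma scale_pos (M t : ℕ) : (0:ℝ) < (2:ℝ) ^ (-(M * t : ℤ)) := by positivity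

lemma scale_step (M t : ℕ) :
    (2:ℝ) ^ (-(M * t : ℤ)) = ((2 ^ M : ℕ) : ℝ) * (2:ℝ) ^ (-(M * (t + 1) : ℤ)) := by
  push_cast
  rw [← zpow_natCast (2:ℝ) M, ← zpow_add₀ (two_ne_zero)]
  ring_nf

lemma key (M N : ℕ) (B' : Set ℝ) (hfin : B'.Finite) (hsub : B' ⊆ Set.Icc 0 1) (R : ℕ → ℕ)
    (hu : uniform M N B' R) :
    ∀ d t, t + d = N → ∀ k : ℤ, (B' ∩ dyI ((2:ℝ) ^ (-(M * t : ℤ))) k).Nonempty →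
      ∏ s ∈ Finset.Ico t N, R s ≤ (B' ∩ dyI ((2:ℝ) ^ (-(M * t : ℤ))) k).ncard := by
  intro d
  induction d with
  | zero =>
    intro t ht k hne
    subst ht
    simp only [Nat.add_zero, Finset.Ico_self, Finset.prod_empty]
    exact (Set.ncard_pos (hfin.inter_of_left _)).2 hne
  | succ d ih =>
    intro t ht k hne
    have htN : t < N := by omega
    set r' : ℝ := (2:ℝ) ^ (-(M * t : ℤ)) with hr'def
    set r : ℝ := (2:ℝ) ^ (-(M * (t + 1) : ℤ)) with hrdef
    have hr : 0 < r := scale_pos M (t+1)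
    have hr' : 0 < r' := scale_pos M t
    have hstep : r' = ((2 ^ M : ℕ) : ℝ) * r := scale_step M t
    set E : Set ℝ := B' ∩ dyI r' k with hEdef
    have hEsub : E ⊆ Set.Icc 0 1 := fun x hx => hsub hx.1
    have hcov : cov r E = R t := hu t htN k hne
    have hSfin : {j : ℤ | (E ∩ dyI r j).Nonempty}.Finite := finite_ks hr hEsub
    classical
    have hFcard : hSfin.toFinset.card = R t := by
      rw [← hcov, cov, Nat.card_coe_set_eq, Set.ncard_eq_toFinset_card _ hSfin]
    have hmem : ∀ j ∈ hSfin.toFinset, (B' ∩ dyI r j).Nonempty ∧ B' ∩ dyI r j ⊆ E := by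
      intro j hj
      rw [Set.Finite.mem_toFinset] at hj
      obtain ⟨x, hxE, hxj⟩ := hj
      have hsub2 : dyI r j ⊆ dyI r' k := by
        rw [hstep]
        exact dyI_subset hr (by positivity) ⟨x, hxj, by rw [← hstep]; exact hxE.2⟩
      exact ⟨⟨x, hxE.1, hxj⟩, fun y hy => ⟨hy.1, hsub2 hy.2⟩⟩
    have hbound : ∀ j ∈ hSfin.toFinset,
        ∏ s ∈ Finset.Ico (t+1) N, R s ≤ (B' ∩ dyI r j).ncard := by
      intro j hj
      exact ih (t+1) (by omega) j (hmem j hj).1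
    calc ∏ s ∈ Finset.Ico t N, R s = R t * ∏ s ∈ Finset.Ico (t+1) N, R s :=
          Finset.prod_eq_prod_Ico_succ_bot htN R
      _ = ∑ _j ∈ hSfin.toFinset, ∏ s ∈ Finset.Ico (t+1) N, R s := by
          rw [Finset.sum_const, hFcard, smul_eq_mul]
      _ ≤ ∑ j ∈ hSfin.toFinset, (B' ∩ dyI r j).ncard := Finset.sum_le_sum hbound
      _ ≤ E.ncard := by
          apply sum_ncard_le _ _ _ (hfin.inter_of_left _)
          · intro j hj; exact (hmem j hj).2
          · intro a _ b _ hab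
            rw [Set.disjoint_left]
            rintro x ⟨_, hxa⟩ ⟨_, hxb⟩
            exact hab (dyI_unique hr hxa hxb)

lemma lat_Icc_finite {δ : ℝ} (hδ : 0 < δ) : (lat δ ∩ Set.Icc 0 1).Finite := by
  apply Set.Finite.subset ((Set.finite_Icc (0:ℤ) ⌈1/δ⌉).image (fun z : ℤ => δ * (z:ℝ)))
  rintro x ⟨⟨z, rfl⟩, hx0, hx1⟩
  refine ⟨z, ⟨?_, ?_⟩, rfl⟩
  · by_contra h
    push_neg at h
    have : (z:ℝ) < 0 := by exact_mod_cast h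
    nlinarith
  · have hz : (z:ℝ) ≤ 1/δ := by
      rw [le_div_iff₀ hδ]; nlinarith
    exact_mod_cast hz.trans (Int.le_ceil _)

/-! ### Auxiliary lemmas on `maxOnes` -/

lemma maxOnes_mem_iff {N : ℕ} {R : ℕ → ℕ} {p : ℕ × ℕ} :
    p ∈ maxOnes N R ↔ p.1 < N ∧ p.2 < N ∧ p.1 ≤ p.2 ∧
      (∀ σ : ℕ, p.1 ≤ σ → σ ≤ p.2 → R σ = 1) ∧
      (p.1 = 0 ∨ R (p.1 - 1) ≠ 1) ∧ (p.2 + 1 = N ∨ R (p.2 + 1) ≠ 1) := by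
  simp only [maxOnes, Finset.mem_filter, Finset.mem_product, Finset.mem_range]
  tauto

lemma maxOnes_inj {N : ℕ} {R : ℕ → ℕ} {p q : ℕ × ℕ}
    (hp : p ∈ maxOnes N R) (hq : q ∈ maxOnes N R) {σ : ℕ}
    (h1 : p.1 ≤ σ) (h2 : σ ≤ p.2) (h3 : q.1 ≤ σ) (h4 : σ ≤ q.2) : p = q := by
  rw [maxOnes_mem_iff] at hp hq
  obtain ⟨hp1, hp2, hp3, hp4, hp5, hp6⟩ := hp
  obtain ⟨hq1, hq2, hq3, hq4, hq5, hq6⟩ := hq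
  have e1 : p.1 = q.1 := by
    by_contra hne
    rcases Nat.lt_or_ge p.1 q.1 with h | h
    · exact (hq5.resolve_left (by omega)) (hp4 (q.1 - 1) (by omega) (by omega))
    · exact (hp5.resolve_left (by omega)) (hq4 (p.1 - 1) (by omega) (by omega))
  have e2 : p.2 = q.2 := by
    by_contra hne
    rcases Nat.lt_or_ge p.2 q.2 with h | h
    · exact (hp6.resolve_left (by omega)) (hq4 (p.2 + 1) (by omega) (by omega))
    · exact (hq6.resolve_left (by omega)) (hp4 (q.2 + 1) (by omega) (by omega))
  exact Prod.ext e1 e2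

lemma maxOnes_cover {N : ℕ} {R : ℕ → ℕ} {s : ℕ} (hs : s < N) (hR : R s = 1) :
    ∃ p ∈ maxOnes N R, p.1 ≤ s ∧ s ≤ p.2 := by
  classical
  have hPex : ∃ j, N ≤ s + j + 1 ∨ R (s + j + 1) ≠ 1 := ⟨N, Or.inl (by omega)⟩
  set d := Nat.find hPex with hd
  have hPd := Nat.find_spec hPex
  have hPlt : ∀ j < d, s + j + 1 < N ∧ R (s + j + 1) = 1 := by
    intro j hj
    have := Nat.find_min hPex hj
    push_neg at this
    exact ⟨by omega, this.2⟩
  have hbN : s + d < N := by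
    rcases Nat.eq_zero_or_pos d with h0 | h0
    · omega
    · have := hPlt (d - 1) (by omega); omega
  have hQex : ∃ i, s ≤ i ∨ R (s - i - 1) ≠ 1 := ⟨s, Or.inl le_rfl⟩
  set e := Nat.find hQex with he
  have hQe := Nat.find_spec hQex
  have hQlt : ∀ i < e, i < s ∧ R (s - i - 1) = 1 := by
    intro i hi
    have := Nat.find_min hQex hi
    push_neg at this
    exact ⟨by omega, this.2⟩
  have hes : e ≤ s := by
    rcases Nat.eq_zero_or_pos e with h0 | h0
    · omega
    · have := hQlt (e - 1) (by omega); omega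
  refine ⟨(s - e, s + d), ?_, by omega, by omega⟩
  rw [maxOnes_mem_iff]
  refine ⟨by omega, hbN, by omega, ?_, ?_, ?_⟩
  · intro σ hσ1 hσ2
    rcases Nat.lt_or_ge σ s with h | h
    · have := hQlt (s - σ - 1) (by omega)
      have heq : s - (s - σ - 1) - 1 = σ := by omega
      rw [heq] at this
      exact this.2
    · rcases Nat.eq_or_lt_of_le h with h' | h'
      · rw [← h']; exact hR
      · have := hPlt (σ - s - 1) (by omega)
        have heq : s + (σ - s - 1) + 1 = σ := by omega
        rw [heq] at this
        exact this.2
  · rcases hQe with h | h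
    · left; omega
    · right
      have heq : s - e - 1 = (s - e) - 1 := by omega
      rw [heq] at h
      exact h
  · rcases hPd with h | h
    · left; omega
    · right; exact h

lemma maxOnes_sum {N : ℕ} {R : ℕ → ℕ} (ℓ : ℕ) :
    ∑ p ∈ maxOnes N R, (ellI ℓ p).card =
      ℓ * ((Finset.range N).filter (fun s => R s = 1)).card := by
  classical
  have hcard : ∀ p ∈ maxOnes N R, (ellI ℓ p).card = ℓ * (Finset.Icc p.1 p.2).card := by
    intro p hp
    have h := (maxOnes_mem_iff.1 hp).2.2.1
    rw [ellI, Nat.card_Ico, Nat.card_Icc]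
    rw [← Nat.mul_sub]
  rw [Finset.sum_congr rfl hcard, ← Finset.mul_sum]
  congr 1
  rw [← Finset.card_biUnion]
  · congr 1
    apply Finset.ext
    intro s
    simp only [Finset.mem_biUnion, Finset.mem_Icc, Finset.mem_filter, Finset.mem_range]
    constructor
    · rintro ⟨p, hp, h1, h2⟩
      have := maxOnes_mem_iff.1 hp
      exact ⟨by omega, this.2.2.2.1 s h1 h2⟩
    · rintro ⟨hs, hR⟩
      obtain ⟨p, hp, h1, h2⟩ := maxOnes_cover hs hR
      exact ⟨p, hp, h1, h2⟩
  · intro p hp q hq hpq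
    simp only [Function.onFun]
    rw [Finset.disjoint_left]
    intro σ h1 h2
    rw [Finset.mem_Icc] at h1 h2
    exact hpq (maxOnes_inj hp hq h1.1 h1.2 h2.1 h2.2)

lemma ellI_disjoint {N : ℕ} {R : ℕ → ℕ} (ℓ : ℕ) {p q : ℕ × ℕ}
    (hp : p ∈ maxOnes N R) (hq : q ∈ maxOnes N R) (hpq : p ≠ q) :
    Disjoint (ellI ℓ p) (ellI ℓ q) := by
  have hsep : p.2 < q.1 ∨ q.2 < p.1 := by
    by_contra h
    push_neg at h
    have h1 := (maxOnes_mem_iff.1 hp).2.2.1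
    have h2 := (maxOnes_mem_iff.1 hq).2.2.1
    have c1 : p.1 ≤ max p.1 q.1 := le_max_left _ _
    have c2 : max p.1 q.1 ≤ p.2 := by omega
    have c3 : q.1 ≤ max p.1 q.1 := le_max_right _ _
    have c4 : max p.1 q.1 ≤ q.2 := by omega
    exact hpq (maxOnes_inj hp hq c1 c2 c3 c4)
  rw [Finset.disjoint_left]
  intro a ha hb
  rw [ellI, Finset.mem_Ico] at ha hb
  rcases hsep with h | h
  · have : ℓ * (p.2 + 1) ≤ ℓ * q.1 := Nat.mul_le_mul_left ℓ (by omega)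
    omega
  · have : ℓ * (q.2 + 1) ≤ ℓ * p.1 := Nat.mul_le_mul_left ℓ (by omega)
    omega

/-- **Corollary (total length of the rescaled trivial-branching intervals).**
In the setting of the previous lemma, the intervals `ℓ𝓘`, `𝓘 ∈ 𝒩_{B′}`, are pairwise
disjoint subintervals of `{0,…,ℓN−1}` of total length at least `(1 − β₁/(1−η))·ℓN`. -/
theorem cor2 (η : ℝ) (hη : η ∈ Set.Ioo (0:ℝ) 1) (ℓ m N : ℕ)
    (δ : ℝ) (hδ : δ = (2:ℝ) ^ (-(ℓ * m * N : ℤ)))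
    (β₁ : ℝ) (hβ₁ : β₁ ∈ Set.Ico (0:ℝ) 1)
    (B : Set ℝ) (hB : B ⊆ lat δ ∩ Set.Icc 0 1) (hBcard : (B.ncard : ℝ) = δ ^ (-β₁))
    (B' : Set ℝ) (hB'B : B' ⊆ B) (hB'card : δ ^ η * (B.ncard : ℝ) ≤ (B'.ncard : ℝ))
    (R : ℕ → ℕ) (hu : uniform (ℓ * m) N B' R) (hpol : polarised η (ℓ * m) N R R) :
    (∀ p ∈ maxOnes N R, ∀ q ∈ maxOnes N R, p ≠ q → Disjoint (ellI ℓ p) (ellI ℓ q)) ∧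
    (1 - β₁ / (1 - η)) * ((ℓ : ℝ) * (N : ℝ)) ≤ ∑ p ∈ maxOnes N R, ((ellI ℓ p).card : ℝ) := by
  classical
  obtain ⟨hη0, hη1⟩ := hη
  obtain ⟨hβ0, hβlt⟩ := hβ₁
  have h1η : (0:ℝ) < 1 - η := by linarith
  have hδpos : 0 < δ := by rw [hδ]; positivity
  have hBfin : B.Finite := (lat_Icc_finite hδpos).subset hB
  have hB'fin : B'.Finite := hBfin.subset hB'B
  have hB'sub : B' ⊆ Set.Icc 0 1 := fun x hx => (hB (hB'B hx)).2
  have hB'ne : B'.Nonempty := by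
    apply Set.nonempty_of_ncard_ne_zero
    intro h0
    rw [h0] at hB'card
    push_cast at hB'card
    rw [hBcard] at hB'card
    nlinarith [Real.rpow_pos_of_pos hδpos η, Real.rpow_pos_of_pos hδpos (-β₁)]
  obtain ⟨x₀, hx₀⟩ := hB'ne
  have hprod : ∏ s ∈ Finset.range N, R s ≤ B'.ncard := by
    have hne : (B' ∩ dyI ((2:ℝ) ^ (-((ℓ*m : ℕ) * (0:ℕ) : ℤ)))
        ⌊x₀ / ((2:ℝ) ^ (-((ℓ*m : ℕ) * (0:ℕ) : ℤ)))⌋).Nonempty :=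
      ⟨x₀, hx₀, dyI_self (scale_pos (ℓ*m) 0) x₀⟩
    have h := key (ℓ*m) N B' hB'fin hB'sub R hu N 0 (by omega) _ hne
    rw [← Finset.range_eq_Ico] at h
    exact le_trans h (Set.ncard_le_ncard Set.inter_subset_left hB'fin)
  have hR1 : ∀ s, s < N → 1 ≤ R s := by
    intro s hs
    have hne : (B' ∩ dyI ((2:ℝ) ^ (-((ℓ*m : ℕ) * s : ℤ)))
        ⌊x₀ / ((2:ℝ) ^ (-((ℓ*m : ℕ) * s : ℤ)))⌋).Nonempty :=
      ⟨x₀, hx₀, dyI_self (scale_pos (ℓ*m) s) x₀⟩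
    rw [← hu s hs _ hne]
    exact cov_pos (scale_pos (ℓ*m) (s+1)) (fun y hy => hB'sub hy.1) hne
  set ones := (Finset.range N).filter (fun s => R s = 1) with honesdef
  set kset := (Finset.range N).filter (fun s => ¬ R s = 1) with hksetdef
  have hsplit : ones.card + kset.card = N := by
    rw [honesdef, hksetdef, Finset.card_filter_add_card_filter_not, Finset.card_range]
  have hsum : ∑ p ∈ maxOnes N R, ((ellI ℓ p).card : ℝ) = (ℓ:ℝ) * ones.card := by
    rw [← Nat.cast_sum, maxOnes_sum ℓ, Nat.cast_mul]
  refine ⟨fun p hp q hq hne => ellI_disjoint ℓ hp hq hne, ?_⟩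
  rcases Nat.eq_zero_or_pos ℓ with hl0 | hlpos
  · subst hl0
    rw [hsum]
    push_cast
    simp
  · have hk : (1 - η) * (kset.card : ℝ) ≤ β₁ * N := by
      by_cases hm : m = 0
      · have hδ1 : δ = 1 := by rw [hδ, hm]; norm_num
        have hB1 : (B.ncard : ℝ) = 1 := by rw [hBcard, hδ1, Real.one_rpow]
        have hBn : B.ncard = 1 := by exact_mod_cast hB1
        have hB'le : B'.ncard ≤ 1 := hBn ▸ Set.ncard_le_ncard hB'B hBfin
        have hempty : kset = ∅ := by
          rw [hksetdef, Finset.filter_eq_empty_iff]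
          intro s hs hRs
          rw [Finset.mem_range] at hs
          have h1 := Finset.single_le_prod' (f := R)
            (fun i hi => hR1 i (Finset.mem_range.1 hi)) (Finset.mem_range.2 hs)
          have h2 := hR1 s hs
          omega
        rw [hempty]
        simp
        positivity
      · have hMpos : 0 < ℓ * m := Nat.mul_pos hlpos (Nat.pos_of_ne_zero hm)
        set c := (1 - η) * ((ℓ*m : ℕ) : ℝ) with hcdef
        have hA1 : ((2:ℝ) ^ c) ^ kset.card ≤ ∏ s ∈ kset, (R s : ℝ) := by
          rw [← Finset.prod_const]
          apply Finset.prod_le_prod (fun i _ => by positivity)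
          intro i hi
          rw [hksetdef, Finset.mem_filter, Finset.mem_range] at hi
          exact hpol i hi.1 (by have := hR1 i hi.1; omega)
        have hA2 : ∏ s ∈ kset, (R s : ℝ) ≤ ∏ s ∈ Finset.range N, (R s : ℝ) := by
          have h : ∏ s ∈ kset, R s ≤ ∏ s ∈ Finset.range N, R s :=
            Finset.prod_le_prod_of_subset_of_one_le' (Finset.filter_subset _ _)
              (fun i hi _ => hR1 i (Finset.mem_range.1 hi))
          exact_mod_cast h
        have hA3 : ∏ s ∈ Finset.range N, (R s : ℝ) ≤ (B.ncard : ℝ) := by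
          exact_mod_cast le_trans hprod (Set.ncard_le_ncard hB'B hBfin)
        have hδr : δ ^ (-β₁) = (2:ℝ) ^ (((ℓ*m*N : ℕ) : ℝ) * β₁) := by
          rw [hδ, ← Real.rpow_intCast 2 (-(↑ℓ * ↑m * ↑N)), ← Real.rpow_mul (by norm_num)]
          congr 1
          push_cast
          ring
        have hLHS : ((2:ℝ) ^ c) ^ kset.card = (2:ℝ) ^ (c * kset.card) := by
          rw [← Real.rpow_natCast ((2:ℝ) ^ c) kset.card, ← Real.rpow_mul (by norm_num)]
        have hcomp : c * (kset.card : ℝ) ≤ ((ℓ*m*N : ℕ) : ℝ) * β₁ := by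
          rw [← Real.rpow_le_rpow_left_iff (x := 2) one_lt_two, ← hLHS, ← hδr]
          exact hA1.trans (hA2.trans (hA3.trans_eq hBcard))
        have hMr : (0:ℝ) < ((ℓ*m : ℕ) : ℝ) := by exact_mod_cast hMpos
        have h3 : ((ℓ*m : ℕ) : ℝ) * ((1 - η) * kset.card) ≤ ((ℓ*m : ℕ) : ℝ) * (β₁ * N) := by
          calc ((ℓ*m : ℕ) : ℝ) * ((1 - η) * kset.card) = c * kset.card := by
                rw [hcdef]; ring
            _ ≤ ((ℓ*m*N : ℕ) : ℝ) * β₁ := hcomp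
            _ = ((ℓ*m : ℕ) : ℝ) * (β₁ * N) := by push_cast; ring
        exact le_of_mul_le_mul_left h3 hMr
    set q := β₁ / (1 - η) with hqdef
    have hq : q * (1 - η) = β₁ := div_mul_cancel₀ β₁ h1η.ne'
    have hkq : (kset.card : ℝ) ≤ q * N := by
      have h3 : (1 - η) * (kset.card : ℝ) ≤ (1 - η) * (q * N) := by
        calc (1 - η) * (kset.card : ℝ) ≤ β₁ * N := hk
          _ = (1 - η) * (q * N) := by rw [← hq]; ring
      exact le_of_mul_le_mul_left h3 h1η
    rw [hsum]
    have hcast : (ones.card : ℝ) + kset.card = N := by exact_mod_cast hsplit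
    have hlr : (0:ℝ) ≤ (ℓ : ℝ) := Nat.cast_nonneg ℓ
    nlinarith [mul_le_mul_of_nonneg_left hkq hlr]
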